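/- (Schur–Horn, Schur direction) If A is a Hermitian d×d matrix, then the vector of its diagonal entries is majorized by the vector of its eigenvalues. -/

import Mathlib

/-- The vector `v` with entries sorted in decreasing order. -/
noncomputable def sortDesc {d : ℕ} (v : Fin d → ℝ) : Fin d → ℝ :=
  fun i => v (Tuple.sort (fun j => -v j) i)

/-- Sum of the `k` largest entries of `v`. -/
noncomputable def psum {d : ℕ} (v : Fin d → ℝ) (k : ℕ) : ℝ :=
  ∑ i ∈ Finset.univ.filter (fun i : Fin d => (i : ℕ) < k), sortDesc v i

/-- `v ≺ w` : `v` is majorized by `w`. -/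
def Majorizes {d : ℕ} (v w : Fin d → ℝ) : Prop :=
  (∀ k : ℕ, k ≤ d → psum v k ≤ psum w k) ∧ ∑ i, v i = ∑ i, w i

lemma sortDesc_antitone {d : ℕ} (v : Fin d → ℝ) : Antitone (sortDesc v) := by
  intro i j hij
  have h := Tuple.monotone_sort (fun j => -v j) hij
  simp only [Function.comp_apply] at h
  unfold sortDesc
  linarith

lemma card_filter_lt {d : ℕ} (k : ℕ) (hk : k ≤ d) :
    (Finset.univ.filter (fun i : Fin d => (i : ℕ) < k)).card = k := by
  have h : (Finset.univ.filter (fun i : Fin d => (i : ℕ) < k)).card = (Finset.range k).card := by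
    refine Finset.card_bij' (fun i _ => (i : ℕ))
      (fun m hm => (⟨m, lt_of_lt_of_le (Finset.mem_range.mp hm) hk⟩ : Fin d)) ?_ ?_ ?_ ?_
    · intro i hi; exact Finset.mem_range.mpr (Finset.mem_filter.mp hi).2
    · intro m hm; simp [Finset.mem_range.mp hm]
    · intro i hi; rfl
    · intro m hm; rfl
  rw [h, Finset.card_range]

lemma psum_eq_sum_image {d : ℕ} (v : Fin d → ℝ) (k : ℕ) :
    psum v k = ∑ i ∈ (Finset.univ.filter (fun i : Fin d => (i : ℕ) < k)).image
      (Tuple.sort (fun j => -v j)), v i := by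
  rw [Finset.sum_image (fun a _ b _ h => (Tuple.sort (fun j => -v j)).injective h)]
  rfl

lemma mem_topSet_iff {d : ℕ} (v : Fin d → ℝ) (k : ℕ) (j : Fin d) :
    j ∈ (Finset.univ.filter (fun i : Fin d => (i : ℕ) < k)).image
      (Tuple.sort (fun j => -v j)) ↔ (((Tuple.sort (fun j => -v j)).symm j : Fin d) : ℕ) < k := by
  constructor
  · rintro h
    obtain ⟨i, hi, rfl⟩ := Finset.mem_image.mp h
    simpa using (Finset.mem_filter.mp hi).2
  · intro h
    exact Finset.mem_image.mpr ⟨(Tuple.sort (fun j => -v j)).symm j,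
      Finset.mem_filter.mpr ⟨Finset.mem_univ _, h⟩, (Tuple.sort (fun j => -v j)).apply_symm_apply j⟩

lemma psum_univ {d : ℕ} (v : Fin d → ℝ) : psum v d = ∑ i, v i := by
  unfold psum
  rw [Finset.filter_true_of_mem (fun i _ => i.isLt)]
  exact Equiv.sum_comp (Tuple.sort (fun j => -v j)) v

/-- Key combinatorial lemma: a `[0,1]`-weighted sum with total weight `k` is at most the
sum of the `k` largest entries. -/
lemma sum_mul_le_psum {d : ℕ} (w c : Fin d → ℝ) (k : ℕ) (hk : k ≤ d)
    (hc0 : ∀ j, 0 ≤ c j) (hc1 : ∀ j, c j ≤ 1) (hsum : ∑ j, c j = k) :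
    ∑ j, c j * w j ≤ psum w k := by
  rcases eq_or_lt_of_le hk with heq | hkd
  · have h1 : ∑ j : Fin d, (1 - c j) = 0 := by
      rw [Finset.sum_sub_distrib, hsum, heq]
      simp
    have hone : ∀ j, c j = (1 : ℝ) := by
      intro j
      have := (Finset.sum_eq_zero_iff_of_nonneg
        (fun i _ => by linarith [hc1 i])).mp h1 j (Finset.mem_univ j)
      linarith
    have : psum w k = psum w d := by rw [heq]
    rw [this, psum_univ]
    apply le_of_eq
    exact Finset.sum_congr rfl (fun j _ => by rw [hone j, one_mul])
  · set σ := Tuple.sort (fun j => -w j) with hσ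
    set T := (Finset.univ.filter (fun i : Fin d => (i : ℕ) < k)).image σ with hT
    set t := sortDesc w ⟨k, hkd⟩ with ht
    have hTcard : T.card = k := by
      rw [hT, Finset.card_image_of_injective _ σ.injective, card_filter_lt k hk]
    have hmem : ∀ j, j ∈ T ↔ ((σ.symm j : Fin d) : ℕ) < k := fun j => mem_topSet_iff w k j
    have hin : ∀ j ∈ T, t ≤ w j := by
      intro j hj
      have h1 : ((σ.symm j : Fin d) : ℕ) < k := (hmem j).mp hj
      have h2 : σ.symm j ≤ (⟨k, hkd⟩ : Fin d) := by
        rw [Fin.le_def]; exact le_of_lt h1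
      have := sortDesc_antitone w h2
      rw [ht]
      calc sortDesc w ⟨k, hkd⟩ ≤ sortDesc w (σ.symm j) := this
        _ = w (σ (σ.symm j)) := rfl
        _ = w j := by rw [σ.apply_symm_apply]
    have hout : ∀ j ∉ T, w j ≤ t := by
      intro j hj
      have h1 : k ≤ ((σ.symm j : Fin d) : ℕ) := le_of_not_gt (fun h => hj ((hmem j).mpr h))
      have h2 : (⟨k, hkd⟩ : Fin d) ≤ σ.symm j := by
        rw [Fin.le_def]; exact h1
      have := sortDesc_antitone w h2
      rw [ht]
      calc w j = w (σ (σ.symm j)) := by rw [σ.apply_symm_apply]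
        _ = sortDesc w (σ.symm j) := rfl
        _ ≤ sortDesc w ⟨k, hkd⟩ := this
    set ind : Fin d → ℝ := fun j => if j ∈ T then 1 else 0 with hind
    have key : ∀ j, (c j - ind j) * (w j - t) ≤ 0 := by
      intro j
      by_cases hj : j ∈ T
      · simp only [hind, hj, if_pos]
        exact mul_nonpos_of_nonpos_of_nonneg (by linarith [hc1 j]) (by linarith [hin j hj])
      · simp only [hind, hj, if_neg, not_false_iff, sub_zero]
        exact mul_nonpos_of_nonneg_of_nonpos (hc0 j) (by linarith [hout j hj])
    have hsumkey : ∑ j, (c j - ind j) * (w j - t) ≤ 0 :=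
      Finset.sum_nonpos (fun j _ => key j)
    have hindsum : ∑ j : Fin d, ind j = k := by
      simp only [hind]
      rw [Finset.sum_ite_mem, Finset.univ_inter, Finset.sum_const, hTcard, nsmul_eq_mul, mul_one]
    have hindw : ∑ j : Fin d, ind j * w j = ∑ j ∈ T, w j := by
      simp only [hind, ite_mul, one_mul, zero_mul, Finset.sum_ite_mem, Finset.univ_inter]
    have expand : ∑ j, (c j - ind j) * (w j - t)
        = (∑ j, c j * w j) - (∑ j, ind j * w j) - t * ((∑ j, c j) - (∑ j, ind j)) := by
      have hterm : ∀ j, (c j - ind j) * (w j - t)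
          = c j * w j - ind j * w j - t * c j + t * ind j := fun j => by ring
      rw [Finset.sum_congr rfl (fun j _ => hterm j)]
      simp only [Finset.sum_add_distrib, Finset.sum_sub_distrib, ← Finset.mul_sum]
      ring
    rw [expand, hsum, hindsum, hindw, sub_self, mul_zero, sub_zero] at hsumkey
    rw [psum_eq_sum_image]
    linarith

/-- Schur–Horn (Schur direction): the diagonal of a Hermitian matrix is
majorized by its vector of eigenvalues. -/
theorem schur_horn_schur_direction {d : ℕ} (A : Matrix (Fin d) (Fin d) ℂ)
    (hA : A.IsHermitian) :
    Majorizes (fun i => (A i i).re) hA.eigenvalues := by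
  classical
  set U : Matrix (Fin d) (Fin d) ℂ := (hA.eigenvectorUnitary : Matrix (Fin d) (Fin d) ℂ) with hU
  set P : Fin d → Fin d → ℝ := fun i j => Complex.normSq (U i j) with hP
  have hP0 : ∀ i j, 0 ≤ P i j := fun i j => Complex.normSq_nonneg _
  -- diagonal entries as weighted sums of eigenvalues
  have hdiag : ∀ i, (A i i).re = ∑ j, P i j * hA.eigenvalues j := by
    intro i
    conv_lhs => rw [hA.spectral_theorem, Unitary.conjStarAlgAut_apply]
    rw [Matrix.mul_apply]
    simp only [Matrix.mul_diagonal, Matrix.star_apply, Function.comp_apply, ← hU,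
      Complex.star_def]
    rw [Complex.re_sum]
    apply Finset.sum_congr rfl
    intro j _
    have : U i j * (hA.eigenvalues j : ℂ) * (starRingEnd ℂ) (U i j)
        = ((P i j * hA.eigenvalues j : ℝ) : ℂ) := by
      rw [show U i j * (hA.eigenvalues j : ℂ) * (starRingEnd ℂ) (U i j)
        = (hA.eigenvalues j : ℂ) * (U i j * (starRingEnd ℂ) (U i j)) by ring]
      rw [Complex.mul_conj, hP]
      push_cast
      ring
    show (U i j * ((hA.eigenvalues j : ℝ) : ℂ) * (starRingEnd ℂ) (U i j)).re
      = P i j * hA.eigenvalues j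
    rw [this, Complex.ofReal_re]
  -- row sums of P are 1
  have hrow : ∀ i, ∑ j, P i j = 1 := by
    intro i
    have h1 : U * star U = 1 := (Matrix.mem_unitaryGroup_iff).mp hA.eigenvectorUnitary.2
    have h2 : (U * star U) i i = 1 := by rw [h1]; simp
    rw [Matrix.mul_apply] at h2
    have h3 : ∑ j, ((P i j : ℝ) : ℂ) = 1 := by
      rw [← h2]
      apply Finset.sum_congr rfl
      intro j _
      rw [Matrix.star_apply, Complex.star_def, Complex.mul_conj, hP]
    have := congrArg Complex.re h3
    rw [Complex.re_sum] at this
    simpa using this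
  -- column sums of P are 1
  have hcol : ∀ j, ∑ i, P i j = 1 := by
    intro j
    have h1 : star U * U = 1 := (Matrix.mem_unitaryGroup_iff').mp hA.eigenvectorUnitary.2
    have h2 : (star U * U) j j = 1 := by rw [h1]; simp
    rw [Matrix.mul_apply] at h2
    have h3 : ∑ i, ((P i j : ℝ) : ℂ) = 1 := by
      rw [← h2]
      apply Finset.sum_congr rfl
      intro i _
      rw [Matrix.star_apply, Complex.star_def,
        mul_comm ((starRingEnd ℂ) (U i j)) (U i j), Complex.mul_conj, hP]
    have := congrArg Complex.re h3
    rw [Complex.re_sum] at this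
    simpa using this
  constructor
  · intro k hk
    -- take the set achieving psum of the diagonal
    set a : Fin d → ℝ := fun i => (A i i).re with ha
    rw [psum_eq_sum_image a k]
    set S := (Finset.univ.filter (fun i : Fin d => (i : ℕ) < k)).image
      (Tuple.sort (fun j => -a j)) with hS
    have hScard : S.card = k := by
      rw [hS, Finset.card_image_of_injective _ (Tuple.sort (fun j => -a j)).injective,
        card_filter_lt k hk]
    set c : Fin d → ℝ := fun j => ∑ i ∈ S, P i j with hc
    have heq : ∑ i ∈ S, a i = ∑ j, c j * hA.eigenvalues j := by
      rw [hc]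
      simp only [ha]
      rw [Finset.sum_congr rfl (fun i _ => hdiag i)]
      rw [Finset.sum_comm]
      apply Finset.sum_congr rfl
      intro j _
      rw [Finset.sum_mul]
    rw [heq]
    apply sum_mul_le_psum _ _ k hk
    · intro j
      exact Finset.sum_nonneg (fun i _ => hP0 i j)
    · intro j
      calc ∑ i ∈ S, P i j ≤ ∑ i, P i j :=
            Finset.sum_le_sum_of_subset_of_nonneg (Finset.subset_univ S)
              (fun i _ _ => hP0 i j)
        _ = 1 := hcol j
    · rw [hc]
      rw [Finset.sum_comm]
      rw [Finset.sum_congr rfl (fun i _ => hrow i)]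
      simp [hScard]
  · rw [Finset.sum_congr rfl (fun i _ => hdiag i), Finset.sum_comm]
    apply Finset.sum_congr rfl
    intro j _
    rw [← Finset.sum_mul, hcol j, one_mul]
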